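/- For any m, n ≥ 1 and any tuples x̃ = (x_1,…,x_m) ∈ ℕ^m and ỹ = (y_1,…,y_n) ∈ ℕ^n, the Gauss measure of cylinders satisfies log 2 ≤ μ(I(x_1,…,x_m,y_1,…,y_n)) / (μ(I(x_1,…,x_m)) · μ(I(y_1,…,y_n))) ≤ 2·log 2. -/

import Mathlib

open MeasureTheory Filter

/-- Continuant data: the Möbius map of a digit string is t ↦ (p + pp*t)/(q + qq*t). -/
structure CFData where
  pp : ℕ
  p : ℕ
  qq : ℕ
  q : ℕ

def cmf : List ℕ → CFData
  | [] => ⟨1, 0, 0, 1⟩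
  | a :: l => ⟨(cmf l).qq, (cmf l).q, (cmf l).pp + a * (cmf l).qq, (cmf l).p + a * (cmf l).q⟩

noncomputable def mob (l : List ℕ) (t : ℝ) : ℝ :=
  ((cmf l).p + (cmf l).pp * t) / ((cmf l).q + (cmf l).qq * t)

lemma cmf_nil : cmf [] = ⟨1, 0, 0, 1⟩ := rfl

lemma cmf_cons (a : ℕ) (l : List ℕ) :
    cmf (a :: l) = ⟨(cmf l).qq, (cmf l).q, (cmf l).pp + a * (cmf l).qq,
      (cmf l).p + a * (cmf l).q⟩ := rfl

/-- basic inequalities valid for all digit strings (digits ≥ 1). -/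
lemma cmf_le (l : List ℕ) (hl : ∀ x ∈ l, 1 ≤ x) :
    1 ≤ (cmf l).q ∧ (cmf l).p ≤ (cmf l).q ∧
      (cmf l).p + (cmf l).pp ≤ (cmf l).q + (cmf l).qq := by
  induction l with
  | nil => simp [cmf_nil]
  | cons a l ih =>
    have ha : 1 ≤ a := hl a (by simp)
    obtain ⟨h1, h2, h3⟩ := ih (fun x hx => hl x (by simp [hx]))
    have hq : (cmf l).q ≤ a * (cmf l).q := Nat.le_mul_of_pos_left _ ha
    have hqq : (cmf l).qq ≤ a * (cmf l).qq := Nat.le_mul_of_pos_left _ ha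
    refine ⟨by simp [cmf_cons]; omega, by simp [cmf_cons]; omega, by simp [cmf_cons]; omega⟩

/-- extra inequalities for nonempty digit strings. -/
lemma cmf_pos (l : List ℕ) (hl : ∀ x ∈ l, 1 ≤ x) (hne : l ≠ []) :
    1 ≤ (cmf l).qq ∧ (cmf l).pp ≤ (cmf l).p ∧
      (cmf l).pp + (cmf l).qq + 1 ≤ (cmf l).p + (cmf l).q ∧ (cmf l).qq ≤ (cmf l).q := by
  induction l with
  | nil => exact absurd rfl hne
  | cons a l ih =>
    have ha : 1 ≤ a := hl a (by simp)
    have hl' : ∀ x ∈ l, 1 ≤ x := fun x hx => hl x (by simp [hx])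
    obtain ⟨hq1, hpq, hppqq⟩ := cmf_le l hl'
    rcases eq_or_ne l [] with rfl | hne'
    · refine ⟨?_, ?_, ?_⟩ <;> simp [cmf_cons, cmf_nil] <;> omega
    · obtain ⟨h1, h2, h3, h4⟩ := ih hl' hne'
      have hq : (cmf l).q ≤ a * (cmf l).q := Nat.le_mul_of_pos_left _ ha
      have hqq2 : (cmf l).qq ≤ a * (cmf l).qq := Nat.le_mul_of_pos_left _ ha
      have hmul : a * (cmf l).qq ≤ a * (cmf l).q := Nat.mul_le_mul_left _ (by omega)
      exact ⟨by simp [cmf_cons]; omega, by simp [cmf_cons]; omega, by simp [cmf_cons]; omega,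
        by simp [cmf_cons]; omega⟩

/-- the determinant of the Möbius map alternates. -/
lemma cmf_det (l : List ℕ) :
    ((cmf l).pp * (cmf l).q : ℤ) - (cmf l).p * (cmf l).qq = (-1) ^ l.length := by
  induction l with
  | nil => simp [cmf_nil]
  | cons a l ih =>
    simp only [cmf_cons, List.length_cons]
    push_cast
    push_cast at ih
    ring_nf
    ring_nf at ih
    nlinarith [ih]

lemma mob_nil (t : ℝ) : mob [] t = t := by simp [mob, cmf_nil]

lemma mob_denom_pos (l : List ℕ) (hl : ∀ x ∈ l, 1 ≤ x) {t : ℝ} (ht : 0 ≤ t) :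
    0 < ((cmf l).q : ℝ) + (cmf l).qq * t := by
  have h1 := (cmf_le l hl).1
  have : (1 : ℝ) ≤ (cmf l).q := by exact_mod_cast h1
  positivity

lemma mob_nonneg (l : List ℕ) (hl : ∀ x ∈ l, 1 ≤ x) {t : ℝ} (ht : 0 ≤ t) :
    0 ≤ mob l t := by
  apply div_nonneg (by positivity) (mob_denom_pos l hl ht).le

lemma mob_cons (a : ℕ) (l : List ℕ) (hl : ∀ x ∈ (a :: l), 1 ≤ x) {t : ℝ} (ht : 0 ≤ t) :
    mob (a :: l) t = 1 / (a + mob l t) := by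
  have hl' : ∀ x ∈ l, 1 ≤ x := fun x hx => hl x (by simp [hx])
  have hd : 0 < ((cmf l).q : ℝ) + (cmf l).qq * t := mob_denom_pos l hl' ht
  have ha' : (1:ℝ) ≤ a := by exact_mod_cast hl a (by simp)
  have hN : (0:ℝ) ≤ ((cmf l).p : ℝ) + (cmf l).pp * t := by positivity
  have h2 : (0:ℝ) < a * (((cmf l).q : ℝ) + (cmf l).qq * t) + (((cmf l).p : ℝ) + (cmf l).pp * t) := by
    nlinarith
  have hq1 : (1:ℝ) ≤ (cmf l).q := by exact_mod_cast (cmf_le l hl').1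
  have h3 : (0:ℝ) < (((cmf l).p + a * (cmf l).q : ℕ) : ℝ) + (((cmf l).pp + a * (cmf l).qq : ℕ) : ℝ) * t := by
    push_cast
    nlinarith [Nat.cast_nonneg (α := ℝ) (cmf l).p, Nat.cast_nonneg (α := ℝ) (cmf l).pp,
      Nat.cast_nonneg (α := ℝ) (cmf l).qq,
      mul_nonneg (mul_nonneg (by linarith : (0:ℝ) ≤ (a:ℝ)) (Nat.cast_nonneg (α := ℝ) (cmf l).qq)) ht,
      mul_nonneg (Nat.cast_nonneg (α := ℝ) (cmf l).pp) ht]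
  rw [mob, mob, cmf_cons, add_div' _ _ _ (ne_of_gt hd), one_div_div]
  dsimp only
  rw [div_eq_div_iff (ne_of_gt h3) (ne_of_gt h2)]
  push_cast
  ring

lemma mob_mem_Icc (l : List ℕ) (hl : ∀ x ∈ l, 1 ≤ x) {t : ℝ} (ht : t ∈ Set.Icc (0:ℝ) 1) :
    mob l t ∈ Set.Icc (0:ℝ) 1 := by
  obtain ⟨ht0, ht1⟩ := ht
  obtain ⟨h1, h2, h3⟩ := cmf_le l hl
  have hd : 0 < ((cmf l).q : ℝ) + (cmf l).qq * t := mob_denom_pos l hl ht0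
  refine ⟨mob_nonneg l hl ht0, ?_⟩
  rw [mob, div_le_one hd]
  have c2 : ((cmf l).p : ℝ) ≤ (cmf l).q := by exact_mod_cast h2
  have c3 : ((cmf l).p : ℝ) + (cmf l).pp ≤ (cmf l).q + (cmf l).qq := by exact_mod_cast h3
  nlinarith

lemma mob_mem_Ioo (l : List ℕ) (hl : ∀ x ∈ l, 1 ≤ x) {t : ℝ} (ht : t ∈ Set.Ioo (0:ℝ) 1) :
    mob l t ∈ Set.Ioo (0:ℝ) 1 := by
  induction l with
  | nil => simpa [mob_nil] using ht
  | cons a l ih =>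
    have hl' : ∀ x ∈ l, 1 ≤ x := fun x hx => hl x (by simp [hx])
    have hx := ih hl'
    have ha : (1:ℝ) ≤ a := by exact_mod_cast hl a (by simp)
    rw [mob_cons a l hl ht.1.le]
    have hax : (0:ℝ) < a + mob l t := by linarith [hx.1]
    exact ⟨div_pos one_pos hax, by rw [div_lt_one hax]; linarith [hx.1]⟩

lemma mob_irrational (l : List ℕ) (hl : ∀ x ∈ l, 1 ≤ x) {t : ℝ}
    (ht : t ∈ Set.Ioo (0:ℝ) 1) (hirr : Irrational t) : Irrational (mob l t) := by
  induction l with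
  | nil => simpa [mob_nil]
  | cons a l ih =>
    have hl' : ∀ x ∈ l, 1 ≤ x := fun x hx => hl x (by simp [hx])
    have hx := ih hl'
    rw [mob_cons a l hl ht.1.le, one_div]
    exact (hx.natCast_add a).inv

lemma mob_not_irrational (l : List ℕ) (hl : ∀ x ∈ l, 1 ≤ x) {t : ℝ}
    (ht : t ∈ Set.Icc (0:ℝ) 1) (hrat : ¬ Irrational t) : ¬ Irrational (mob l t) := by
  rw [Irrational, not_not] at hrat
  obtain ⟨r, hr⟩ := hrat
  have hd : 0 < ((cmf l).q : ℝ) + (cmf l).qq * t := mob_denom_pos l hl ht.1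
  rw [Irrational, not_not]
  refine ⟨((cmf l).p + (cmf l).pp * r) / ((cmf l).q + (cmf l).qq * r), ?_⟩
  rw [mob, ← hr]
  push_cast
  rfl

lemma mob_append (la lb : List ℕ) (ha : ∀ x ∈ la, 1 ≤ x) (hb : ∀ x ∈ lb, 1 ≤ x)
    {t : ℝ} (ht : t ∈ Set.Icc (0:ℝ) 1) :
    mob (la ++ lb) t = mob la (mob lb t) := by
  induction la with
  | nil => simp [mob_nil]
  | cons a la ih =>
    have ha' : ∀ x ∈ la, 1 ≤ x := fun x hx => ha x (by simp [hx])
    have hab : ∀ x ∈ (a :: (la ++ lb)), 1 ≤ x := by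
      intro x hx
      simp only [List.mem_cons, List.mem_append] at hx
      rcases hx with rfl | hx | hx
      · exact ha x (by simp)
      · exact ha' x hx
      · exact hb x hx
    rw [List.cons_append, mob_cons a (la ++ lb) hab ht.1, ih ha',
      mob_cons a la ha (mob_mem_Icc lb hb ht).1]
/-- The Gauss map `T(x) = 1/x mod 1`. -/
noncomputable def gaussMap (x : ℝ) : ℝ := Int.fract (1 / x)

/-- The `n`-th partial quotient (indexed from `0`): `a_{n+1}(ω) = ⌊1 / T^n(ω)⌋`. -/
noncomputable def cfDigit (n : ℕ) (ω : ℝ) : ℕ := ⌊1 / (gaussMap^[n] ω)⌋₊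

/-- The Gauss measure on `(0,1)`, with density `1/((log 2)(1+t))` w.r.t. Lebesgue. -/
noncomputable def gaussMeasure : Measure ℝ :=
  (volume.restrict (Set.Ioo (0 : ℝ) 1)).withDensity
    (fun t => ENNReal.ofReal (1 / (Real.log 2 * (1 + t))))

/-- The cylinder `I(a_1, …, a_n)`: irrationals in `(0,1)` whose continued fraction
expansion begins with `a_1, …, a_n`. -/
def cylinder (n : ℕ) (a : Fin n → ℕ) : Set ℝ :=
  {ω | ω ∈ Set.Ioo (0 : ℝ) 1 ∧ Irrational ω ∧ ∀ i : Fin n, cfDigit i ω = a i}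

lemma cfDigit_zero (ω : ℝ) : cfDigit 0 ω = ⌊1/ω⌋₊ := by
  simp [cfDigit]

lemma cfDigit_succ (i : ℕ) (ω : ℝ) : cfDigit (i + 1) ω = cfDigit i (gaussMap ω) := by
  rw [cfDigit, cfDigit, Function.iterate_succ_apply]

lemma gauss_step {ω : ℝ} (h01 : ω ∈ Set.Ioo (0:ℝ) 1) (hirr : Irrational ω) :
    gaussMap ω ∈ Set.Ioo (0:ℝ) 1 ∧ Irrational (gaussMap ω) ∧
      ((cfDigit 0 ω : ℝ) + gaussMap ω = 1 / ω) ∧ 1 ≤ cfDigit 0 ω := by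
  obtain ⟨h0, h1⟩ := h01
  have hio : Irrational (1 / ω) := by rw [one_div]; exact hirr.inv
  have hfi : Irrational (gaussMap ω) := by
    rw [gaussMap, ← Int.self_sub_floor]
    exact hio.sub_intCast _
  have hf0 : 0 < gaussMap ω := by
    rcases lt_or_eq_of_le (Int.fract_nonneg (1/ω)) with h | h
    · exact h
    · exfalso
      rw [gaussMap, ← h] at hfi
      exact Rat.not_irrational 0 (by exact_mod_cast hfi)
  refine ⟨⟨hf0, Int.fract_lt_one _⟩, hfi, ?_, ?_⟩
  · rw [cfDigit_zero, gaussMap]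
    have hcast : ((⌊1/ω⌋₊ : ℕ) : ℝ) = ((⌊1/ω⌋ : ℤ) : ℝ) := by
      exact_mod_cast Int.natCast_floor_eq_floor (by positivity : (0:ℝ) ≤ 1/ω)
    rw [hcast, Int.floor_add_fract]
  · rw [cfDigit_zero]
    exact Nat.le_floor (by rw [le_div_iff₀ h0]; push_cast; linarith)

lemma cyl_eq (n : ℕ) (a : Fin n → ℕ) (ha : ∀ i, 1 ≤ a i) :
    cylinder n a = mob (List.ofFn a) '' {t : ℝ | t ∈ Set.Ioo (0:ℝ) 1 ∧ Irrational t} := by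
  induction n with
  | zero =>
    have hid : mob (List.ofFn a) = id := by
      funext t
      simp [List.ofFn_zero, mob_nil]
    rw [hid, Set.image_id]
    ext ω
    exact ⟨fun h => ⟨h.1, h.2.1⟩, fun h => ⟨h.1, h.2, fun i => i.elim0⟩⟩
  | succ n ih =>
    have ha' : ∀ i : Fin n, 1 ≤ a i.succ := fun i => ha i.succ
    have hlt : ∀ x ∈ List.ofFn (fun i : Fin n => a i.succ), 1 ≤ x := by
      intro x hx
      rw [List.mem_ofFn] at hx
      obtain ⟨i, rfl⟩ := hx
      exact ha' i
    have hcons : ∀ x ∈ (a 0 :: List.ofFn (fun i : Fin n => a i.succ)), 1 ≤ x := by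
      intro x hx
      rcases List.mem_cons.1 hx with rfl | hx
      · exact ha 0
      · exact hlt x hx
    ext ω
    rw [List.ofFn_succ]
    constructor
    · rintro ⟨h01, hirr, hd⟩
      obtain ⟨hT01, hTirr, hkey, _⟩ := gauss_step h01 hirr
      have hTc : gaussMap ω ∈ cylinder n (fun i => a i.succ) := by
        refine ⟨hT01, hTirr, fun i => ?_⟩
        have h := hd i.succ
        rwa [Fin.val_succ, cfDigit_succ] at h
      rw [ih (fun i => a i.succ) ha'] at hTc
      obtain ⟨s, hs, hmob⟩ := hTc
      refine ⟨s, hs, ?_⟩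
      rw [mob_cons _ _ hcons hs.1.1.le, hmob]
      have hd0 : (cfDigit 0 ω : ℝ) = (a 0 : ℝ) := by
        have := hd 0
        simp only [Fin.val_zero] at this
        exact_mod_cast this
      rw [← hd0, hkey, one_div_one_div]
    · rintro ⟨s, ⟨hs01, hsirr⟩, rfl⟩
      rw [mob_cons _ _ hcons hs01.1.le]
      set x := mob (List.ofFn (fun i : Fin n => a i.succ)) s with hxdef
      have hx01 : x ∈ Set.Ioo (0:ℝ) 1 := mob_mem_Ioo _ hlt hs01
      have hxirr : Irrational x := mob_irrational _ hlt hs01 hsirr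
      have ha0 : (1:ℝ) ≤ (a 0 : ℝ) := by exact_mod_cast ha 0
      have hy0 : (0:ℝ) < (a 0 : ℝ) + x := by linarith [hx01.1]
      have hy1 : (1:ℝ) < (a 0 : ℝ) + x := by linarith [hx01.1]
      have hmem : 1 / ((a 0 : ℝ) + x) ∈ Set.Ioo (0:ℝ) 1 := by
        constructor
        · positivity
        · rw [div_lt_one hy0]; linarith
      have hirrw : Irrational (1 / ((a 0 : ℝ) + x)) := by
        rw [one_div]
        exact (hxirr.natCast_add (a 0)).inv
      have hinv : 1 / (1 / ((a 0 : ℝ) + x)) = (a 0 : ℝ) + x := one_div_one_div _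
      have hgauss : gaussMap (1 / ((a 0 : ℝ) + x)) = x := by
        rw [gaussMap, hinv, Int.fract_natCast_add, Int.fract_eq_self.2 ⟨hx01.1.le, hx01.2⟩]
      have hxc : x ∈ cylinder n (fun i => a i.succ) := by
        rw [ih (fun i => a i.succ) ha']
        exact ⟨s, ⟨hs01, hsirr⟩, rfl⟩
      refine ⟨hmem, hirrw, fun i => ?_⟩
      induction i using Fin.cases with
      | zero =>
        simp only [Fin.val_zero]
        rw [cfDigit_zero, hinv]
        rw [Nat.floor_eq_iff (by positivity)]
        exact ⟨by linarith [hx01.1], by push_cast; linarith [hx01.2]⟩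
      | succ i =>
        rw [Fin.val_succ, cfDigit_succ, hgauss]
        exact hxc.2.2 i

noncomputable def mdet (l : List ℕ) : ℝ :=
  ((cmf l).pp : ℝ) * (cmf l).q - ((cmf l).p : ℝ) * (cmf l).qq

lemma mdet_eq (l : List ℕ) : mdet l = ((-1 : ℤ) ^ l.length : ℤ) := by
  have := cmf_det l
  rw [mdet]
  exact_mod_cast this

lemma mdet_cases (l : List ℕ) : mdet l = 1 ∨ mdet l = -1 := by
  rw [mdet_eq]
  rcases Nat.even_or_odd l.length with h | h
  · left; rw [h.neg_one_pow]; norm_num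
  · right; rw [h.neg_one_pow]; norm_num

lemma mob_sub (l : List ℕ) (hl : ∀ x ∈ l, 1 ≤ x) {t1 t2 : ℝ} (h1 : 0 ≤ t1) (h2 : 0 ≤ t2) :
    mob l t2 - mob l t1 =
      mdet l * (t2 - t1) / ((((cmf l).q : ℝ) + (cmf l).qq * t1) * (((cmf l).q : ℝ) + (cmf l).qq * t2)) := by
  have hd1 := mob_denom_pos l hl h1
  have hd2 := mob_denom_pos l hl h2
  rw [mob, mob, mdet, div_sub_div _ _ (ne_of_gt hd2) (ne_of_gt hd1), div_eq_div_iff (by positivity) (by positivity)]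
  ring

lemma mob_continuousOn (l : List ℕ) (hl : ∀ x ∈ l, 1 ≤ x) :
    ContinuousOn (mob l) (Set.Icc (0:ℝ) 1) := by
  apply ContinuousOn.div
  · fun_prop
  · fun_prop
  · exact fun t ht => (mob_denom_pos l hl ht.1).ne'

lemma mob_image (l : List ℕ) (hl : ∀ x ∈ l, 1 ≤ x) :
    mob l '' {t : ℝ | t ∈ Set.Ioo (0:ℝ) 1 ∧ Irrational t} =
      {x : ℝ | x ∈ Set.Ioo (min (mob l 0) (mob l 1)) (max (mob l 0) (mob l 1)) ∧ Irrational x} := by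
  have hcont := mob_continuousOn l hl
  have key : ∀ t1 t2 : ℝ, 0 ≤ t1 → 0 ≤ t2 → t1 < t2 → mdet l = 1 → mob l t1 < mob l t2 := by
    intro t1 t2 h1 h2 hlt hdet
    have hs := mob_sub l hl h1 h2
    have hd1 := mob_denom_pos l hl h1
    have hd2 := mob_denom_pos l hl h2
    have hpos : 0 < mob l t2 - mob l t1 := by
      rw [hs, hdet, one_mul]
      exact div_pos (by linarith) (by positivity)
    linarith
  have key' : ∀ t1 t2 : ℝ, 0 ≤ t1 → 0 ≤ t2 → t1 < t2 → mdet l = -1 → mob l t2 < mob l t1 := by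
    intro t1 t2 h1 h2 hlt hdet
    have hs := mob_sub l hl h1 h2
    have hd1 := mob_denom_pos l hl h1
    have hd2 := mob_denom_pos l hl h2
    rw [hdet, neg_one_mul, neg_div] at hs
    have hpos : 0 < (t2 - t1) / ((((cmf l).q : ℝ) + (cmf l).qq * t1) * (((cmf l).q : ℝ) + (cmf l).qq * t2)) :=
      div_pos (by linarith) (by positivity)
    linarith
  ext y
  constructor
  · rintro ⟨t, ⟨ht01, htirr⟩, rfl⟩
    refine ⟨?_, mob_irrational l hl ht01 htirr⟩
    rcases mdet_cases l with hdet | hdet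
    · have h01 : mob l 0 < mob l 1 := key 0 1 le_rfl zero_le_one one_pos hdet
      rw [min_eq_left h01.le, max_eq_right h01.le]
      exact ⟨key 0 t le_rfl ht01.1.le ht01.1 hdet, key t 1 ht01.1.le zero_le_one ht01.2 hdet⟩
    · have h01 : mob l 1 < mob l 0 := key' 0 1 le_rfl zero_le_one one_pos hdet
      rw [min_eq_right h01.le, max_eq_left h01.le]
      exact ⟨key' t 1 ht01.1.le zero_le_one ht01.2 hdet, key' 0 t le_rfl ht01.1.le ht01.1 hdet⟩
  · rintro ⟨hy, hyirr⟩
    have himg : y ∈ mob l '' Set.Ioo 0 1 := by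
      rcases mdet_cases l with hdet | hdet
      · have h01 : mob l 0 < mob l 1 := key 0 1 le_rfl zero_le_one one_pos hdet
        rw [min_eq_left h01.le, max_eq_right h01.le] at hy
        exact intermediate_value_Ioo zero_le_one hcont hy
      · have h01 : mob l 1 < mob l 0 := key' 0 1 le_rfl zero_le_one one_pos hdet
        rw [min_eq_right h01.le, max_eq_left h01.le] at hy
        exact intermediate_value_Ioo' zero_le_one hcont hy
    obtain ⟨t, ht, rfl⟩ := himg
    refine ⟨t, ⟨ht, ?_⟩, rfl⟩
    by_contra hrat
    exact mob_not_irrational l hl (Set.Ioo_subset_Icc_self ht) hrat hyirr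

lemma gaussMeasure_Ioo_irr {u v : ℝ} (h0 : 0 ≤ u) (huv : u ≤ v) (h1 : v ≤ 1) :
    gaussMeasure {x : ℝ | x ∈ Set.Ioo u v ∧ Irrational x} =
      ENNReal.ofReal ((Real.log (1+v) - Real.log (1+u)) / Real.log 2) := by
  have hIrr : MeasurableSet {x : ℝ | Irrational x} := by
    have : {x : ℝ | Irrational x} = (Set.range ((↑) : ℚ → ℝ))ᶜ := rfl
    rw [this]
    exact (Set.countable_range _).measurableSet.compl
  have hSeq : {x : ℝ | x ∈ Set.Ioo u v ∧ Irrational x} = Set.Ioo u v ∩ {x : ℝ | Irrational x} := rfl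
  have hS : MeasurableSet {x : ℝ | x ∈ Set.Ioo u v ∧ Irrational x} := by
    rw [hSeq]; exact measurableSet_Ioo.inter hIrr
  rw [gaussMeasure, withDensity_apply _ hS, Measure.restrict_restrict hS]
  have hsub : {x : ℝ | x ∈ Set.Ioo u v ∧ Irrational x} ∩ Set.Ioo 0 1 = {x : ℝ | x ∈ Set.Ioo u v ∧ Irrational x} := by
    apply Set.inter_eq_left.2
    rintro x ⟨hx, -⟩
    exact ⟨lt_of_le_of_lt h0 hx.1, lt_of_lt_of_le hx.2 h1⟩
  rw [hsub]
  have hae : {x : ℝ | x ∈ Set.Ioo u v ∧ Irrational x} =ᵐ[volume] Set.Ioo u v := by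
    have hnull : volume (Set.range ((↑) : ℚ → ℝ)) = 0 :=
      (Set.countable_range _).measure_zero _
    rw [Filter.eventuallyEq_set]
    filter_upwards [measure_eq_zero_iff_ae_notMem.mp hnull] with x hx
    exact ⟨fun h => h.1, fun h => ⟨h, hx⟩⟩
  rw [setLIntegral_congr hae]
  have hint : IntegrableOn (fun x : ℝ => 1 / (Real.log 2 * (1 + x))) (Set.Ioo u v) volume := by
    apply IntegrableOn.mono_set _ Set.Ioo_subset_Icc_self
    apply ContinuousOn.integrableOn_Icc
    apply ContinuousOn.div continuousOn_const
    · fun_prop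
    · intro x hx
      have : (0:ℝ) < 1 + x := by linarith [hx.1]
      have h2 : (0:ℝ) < Real.log 2 := Real.log_pos (by norm_num)
      positivity
  have hnn : 0 ≤ᵐ[volume.restrict (Set.Ioo u v)] fun x : ℝ => 1 / (Real.log 2 * (1 + x)) := by
    rw [EventuallyLE, ae_restrict_iff' measurableSet_Ioo]
    apply ae_of_all
    intro x hx
    have : (0:ℝ) < 1 + x := by linarith [hx.1]
    have h2 : (0:ℝ) < Real.log 2 := Real.log_pos (by norm_num)
    positivity
  rw [← ofReal_integral_eq_lintegral_ofReal hint hnn]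
  congr 1
  rw [← integral_Ioc_eq_integral_Ioo, ← intervalIntegral.integral_of_le huv]
  have hderiv : ∀ x ∈ Set.uIcc u v, HasDerivAt (fun y => Real.log (1+y) / Real.log 2)
      (1 / (Real.log 2 * (1 + x))) x := by
    intro x hx
    rw [Set.uIcc_of_le huv] at hx
    have h1x : (0:ℝ) < 1 + x := by linarith [hx.1]
    have h2 : (0:ℝ) < Real.log 2 := Real.log_pos (by norm_num)
    have hd : HasDerivAt (fun y : ℝ => 1 + y) 1 x := (hasDerivAt_id x).const_add 1
    have hlog : HasDerivAt (fun y : ℝ => Real.log (1+y)) ((1+x)⁻¹ * 1) x :=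
      (Real.hasDerivAt_log (ne_of_gt h1x)).comp x hd
    have := hlog.div_const (Real.log 2)
    refine this.congr_deriv ?_
    rw [one_div, mul_inv]
    ring
  have hii : IntervalIntegrable (fun x : ℝ => 1 / (Real.log 2 * (1 + x))) volume u v := by
    apply ContinuousOn.intervalIntegrable
    rw [Set.uIcc_of_le huv]
    apply ContinuousOn.div continuousOn_const
    · fun_prop
    · intro x hx
      have : (0:ℝ) < 1 + x := by linarith [hx.1]
      have h2 : (0:ℝ) < Real.log 2 := Real.log_pos (by norm_num)
      positivity
  rw [intervalIntegral.integral_eq_sub_of_hasDerivAt hderiv hii]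
  ring

lemma gaussMeasure_cyl (n : ℕ) (a : Fin n → ℕ) (ha : ∀ i, 1 ≤ a i) :
    gaussMeasure (_root_.cylinder n a) =
      ENNReal.ofReal (|Real.log (1 + mob (List.ofFn a) 1) - Real.log (1 + mob (List.ofFn a) 0)| / Real.log 2) := by
  have hl : ∀ x ∈ List.ofFn a, 1 ≤ x := by
    intro x hx
    rw [List.mem_ofFn] at hx
    obtain ⟨i, rfl⟩ := hx
    exact ha i
  set l := List.ofFn a with hldef
  have h0 := mob_mem_Icc l hl (Set.mem_Icc.2 ⟨le_rfl, zero_le_one⟩)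
  have h1 := mob_mem_Icc l hl (Set.mem_Icc.2 ⟨zero_le_one, le_rfl⟩)
  rw [cyl_eq n a ha, ← hldef, mob_image l hl,
    gaussMeasure_Ioo_irr (le_min h0.1 h1.1) (min_le_max) (max_le h0.2 h1.2)]
  congr 1
  rcases le_total (mob l 0) (mob l 1) with h | h
  · rw [min_eq_left h, max_eq_right h, abs_of_nonneg]
    exact sub_nonneg.2 (Real.log_le_log (by linarith [h0.1]) (by linarith))
  · rw [min_eq_right h, max_eq_left h, abs_of_nonpos]
    · ring
    · exact sub_nonpos.2 (Real.log_le_log (by linarith [h1.1]) (by linarith))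

noncomputable def Qd (l : List ℕ) (t : ℝ) : ℝ :=
  (((cmf l).q : ℝ) + (cmf l).qq * t) *
    ((((cmf l).p : ℝ) + (cmf l).q) + (((cmf l).pp : ℝ) + (cmf l).qq) * t)

lemma Qd_pos (l : List ℕ) (hl : ∀ x ∈ l, 1 ≤ x) {t : ℝ} (ht : 0 ≤ t) : 0 < Qd l t := by
  have h1 := mob_denom_pos l hl ht
  have hq : (1:ℝ) ≤ (cmf l).q := by exact_mod_cast (cmf_le l hl).1
  have : (0:ℝ) < (((cmf l).p : ℝ) + (cmf l).q) + (((cmf l).pp : ℝ) + (cmf l).qq) * t := by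
    have := Nat.cast_nonneg (α := ℝ) (cmf l).p
    have := Nat.cast_nonneg (α := ℝ) (cmf l).pp
    have := Nat.cast_nonneg (α := ℝ) (cmf l).qq
    nlinarith
  exact mul_pos h1 this

lemma one_add_mob_pos (l : List ℕ) (hl : ∀ x ∈ l, 1 ≤ x) {t : ℝ} (ht : 0 ≤ t) :
    0 < 1 + mob l t := by
  have := mob_nonneg l hl ht
  linarith

lemma hasDerivAt_logmob (l : List ℕ) (hl : ∀ x ∈ l, 1 ≤ x) {t : ℝ} (ht : 0 ≤ t) :
    HasDerivAt (fun y => Real.log (1 + mob l y)) (mdet l / Qd l t) t := by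
  have hd := mob_denom_pos l hl ht
  have hnum : HasDerivAt (fun y : ℝ => ((cmf l).p : ℝ) + (cmf l).pp * y) ((cmf l).pp) t := by
    simpa using ((hasDerivAt_id t).const_mul ((cmf l).pp : ℝ)).const_add (((cmf l).p : ℝ))
  have hden : HasDerivAt (fun y : ℝ => ((cmf l).q : ℝ) + (cmf l).qq * y) ((cmf l).qq) t := by
    simpa using ((hasDerivAt_id t).const_mul ((cmf l).qq : ℝ)).const_add (((cmf l).q : ℝ))
  have hmob : HasDerivAt (mob l)
      ((((cmf l).pp : ℝ) * (((cmf l).q : ℝ) + (cmf l).qq * t) -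
        (((cmf l).p : ℝ) + (cmf l).pp * t) * (cmf l).qq) /
        (((cmf l).q : ℝ) + (cmf l).qq * t) ^ 2) t := hnum.div hden (ne_of_gt hd)
  have h1m : 0 < 1 + mob l t := one_add_mob_pos l hl ht
  have hlog := (Real.hasDerivAt_log (ne_of_gt h1m)).comp t (hmob.const_add 1)
  refine hlog.congr_deriv (Eq.symm ?_)
  have hsum : (0:ℝ) < (((cmf l).q : ℝ) + (cmf l).qq * t) + (((cmf l).p : ℝ) + (cmf l).pp * t) := by
    have := Nat.cast_nonneg (α := ℝ) (cmf l).p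
    have h2 := Nat.cast_nonneg (α := ℝ) (cmf l).pp
    nlinarith
  have h1meq : 1 + mob l t =
      ((((cmf l).q : ℝ) + (cmf l).qq * t) + (((cmf l).p : ℝ) + (cmf l).pp * t)) /
        (((cmf l).q : ℝ) + (cmf l).qq * t) := by
    rw [mob, one_add_div hd.ne']
  have hq1 : (1:ℝ) ≤ ((cmf l).q : ℝ) := by exact_mod_cast (cmf_le l hl).1
  have hfac2 : (0:ℝ) < (((cmf l).p : ℝ) + (cmf l).q) + (((cmf l).pp : ℝ) + (cmf l).qq) * t := by
    have := Nat.cast_nonneg (α := ℝ) (cmf l).p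
    have h2 := Nat.cast_nonneg (α := ℝ) (cmf l).pp
    have h3 := Nat.cast_nonneg (α := ℝ) (cmf l).qq
    nlinarith
  rw [mdet, Qd, h1meq, inv_div, div_mul_div_comm,
    div_eq_div_iff (mul_pos hd hfac2).ne' (mul_pos hsum (pow_pos hd 2)).ne']
  ring

-- polynomial inequalities
private lemma poly_upper (p' p q' q t : ℝ) (h1 : 0 ≤ p') (h2 : p' ≤ p) (h3 : 1 ≤ q') (h4 : q' ≤ q)
    (h5 : p' + q' + 1 ≤ p + q) (ht0 : 0 ≤ t) (ht1 : t ≤ 1) :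
    (q+q'*t)*((p+q)+(p'+q')*t) ≤ ((p+q)*(q+q') - 1)*(1+t) := by
  nlinarith [mul_nonneg (mul_nonneg (by linarith : (0:ℝ) ≤ p'+q') (by linarith : (0:ℝ) ≤ q')) (mul_nonneg (by linarith : (0:ℝ) ≤ 1+t) (by linarith : (0:ℝ) ≤ 1-t)),
    mul_nonneg (by nlinarith : (0:ℝ) ≤ (p+q-p'-q')*q' - 1) (by linarith : (0:ℝ) ≤ 1+t),
    mul_nonneg (mul_nonneg (by linarith : (0:ℝ) ≤ p+q-p'-q') (by linarith : (0:ℝ) ≤ q-q')) ht0]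

private lemma poly_lower_gen (p' p q' q t : ℝ) (h1 : 0 ≤ p') (h2 : p' ≤ p) (h3 : 1 ≤ q') (h4 : q' ≤ q)
    (ht0 : 0 ≤ t) (ht1 : t ≤ 1) :
    (p+q)*(q+q')*(1+t) ≤ 2*(q+q'*t)*((p+q)+(p'+q')*t) := by
  nlinarith [mul_nonneg (mul_nonneg (by linarith : (0:ℝ) ≤ q') (by linarith : (0:ℝ) ≤ p'+q')) (mul_nonneg ht0 (by linarith : (0:ℝ) ≤ 1+t)),
    mul_nonneg (mul_nonneg (by linarith : (0:ℝ) ≤ p'+q') (by linarith : (0:ℝ) ≤ q-q')) (by linarith : (0:ℝ) ≤ 1+t),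
    mul_nonneg (mul_nonneg (by linarith : (0:ℝ) ≤ p+q-p'-q'+ (p'+q')) (by linarith : (0:ℝ) ≤ q-q')) (by linarith : (0:ℝ) ≤ 1-t),
    mul_nonneg (mul_nonneg (by linarith : (0:ℝ) ≤ p+q) (by linarith : (0:ℝ) ≤ q-q')) (by linarith : (0:ℝ) ≤ 1-t)]

private lemma poly_lower_eps (p' p q' q t : ℝ) (h1 : 0 ≤ p') (h2 : p' ≤ p) (h3 : 1 ≤ q') (h4 : q'+1 ≤ q)
    (h5 : p' + q' + 1 ≤ p + q) (ht0 : 0 ≤ t) (ht1 : t ≤ 1) :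
    ((p+q)*(q+q') + 1)*(1+t) ≤ 2*(q+q'*t)*((p+q)+(p'+q')*t) := by
  nlinarith [mul_nonneg (mul_nonneg (by linarith : (0:ℝ) ≤ q') (by linarith : (0:ℝ) ≤ p'+q')) (mul_nonneg ht0 (by linarith : (0:ℝ) ≤ 1+t)),
    mul_nonneg (by nlinarith : (0:ℝ) ≤ (p'+q')*(q-q') - 1) (by linarith : (0:ℝ) ≤ 1+t),
    mul_nonneg (mul_nonneg (by linarith : (0:ℝ) ≤ p+q-p'-q') (by linarith : (0:ℝ) ≤ q-q')) (by linarith : (0:ℝ) ≤ 1-t)]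

set_option maxHeartbeats 1000000 in
/-- The key pointwise bound: with `c` the `log`-length of the cylinder interval,
`c * Qd l t ≤ 1 + t ≤ 2 * c * Qd l t` on `[0,1]`. -/
lemma master (l : List ℕ) (hl : ∀ x ∈ l, 1 ≤ x) (hne : l ≠ []) {t : ℝ} (ht0 : 0 ≤ t) (ht1 : t ≤ 1) :
    |Real.log (1 + mob l 1) - Real.log (1 + mob l 0)| * Qd l t ≤ 1 + t ∧
      1 + t ≤ 2 * |Real.log (1 + mob l 1) - Real.log (1 + mob l 0)| * Qd l t := by
  obtain ⟨hq1, hpq, hsum1⟩ := cmf_le l hl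
  obtain ⟨hqq1, hpp, hsum2, hqqq⟩ := cmf_pos l hl hne
  have cQ1 : (1:ℝ) ≤ ((cmf l).q : ℝ) := by exact_mod_cast hq1
  have cQ'1 : (1:ℝ) ≤ ((cmf l).qq : ℝ) := by exact_mod_cast hqq1
  have cQ'Q : ((cmf l).qq : ℝ) ≤ ((cmf l).q : ℝ) := by exact_mod_cast hqqq
  have cP'0 : (0:ℝ) ≤ ((cmf l).pp : ℝ) := Nat.cast_nonneg _
  have cP0 : (0:ℝ) ≤ ((cmf l).p : ℝ) := Nat.cast_nonneg _
  have cP'P : ((cmf l).pp : ℝ) ≤ ((cmf l).p : ℝ) := by exact_mod_cast hpp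
  have cPQ : ((cmf l).p : ℝ) ≤ ((cmf l).q : ℝ) := by exact_mod_cast hpq
  have csum : ((cmf l).pp : ℝ) + ((cmf l).qq : ℝ) + 1 ≤ ((cmf l).p : ℝ) + ((cmf l).q : ℝ) := by
    exact_mod_cast hsum2
  set P' : ℝ := ((cmf l).pp : ℝ) with hP'
  set P : ℝ := ((cmf l).p : ℝ) with hP
  set Q' : ℝ := ((cmf l).qq : ℝ) with hQ'
  set Q : ℝ := ((cmf l).q : ℝ) with hQ
  set A : ℝ := (P + Q) * (Q + Q') with hA
  have hA2 : 2 ≤ A := by nlinarith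
  -- value of c
  have hm0 : mob l 0 = P / Q := by rw [mob]; norm_num; rfl
  have hm1 : mob l 1 = (P + P') / (Q + Q') := by rw [mob]; norm_num; rfl
  have hQpos : (0:ℝ) < Q := by linarith
  have hQQ'pos : (0:ℝ) < Q + Q' := by linarith
  have h10 : 1 + mob l 0 = (P + Q) / Q := by rw [hm0]; field_simp; try ring
  have h11 : 1 + mob l 1 = (P + P' + Q + Q') / (Q + Q') := by rw [hm1]; field_simp; try ring
  have hPQpos : (0:ℝ) < P + Q := by linarith
  have hBpos : (0:ℝ) < P + P' + Q + Q' := by linarith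
  have hlogdiff : Real.log (1 + mob l 1) - Real.log (1 + mob l 0) =
      Real.log (Q * (P + P' + Q + Q')) - Real.log A := by
    rw [h10, h11, Real.log_div (by positivity) (by positivity),
      Real.log_div (by positivity) (by positivity), hA,
      Real.log_mul (by positivity) (by positivity), Real.log_mul (by positivity) (by positivity)]
    ring
  have hBA : Q * (P + P' + Q + Q') = A + mdet l := by rw [mdet, hA]; ring
  have hQdpos : 0 < Qd l t := Qd_pos l hl ht0
  have hQdeq : Qd l t = (Q + Q'*t)*((P+Q)+(P'+Q')*t) := by rw [Qd]; try ring
  rcases mdet_cases l with hdet | hdet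
  · -- B = A + 1 : c = log (A+1) - log A
    have hc : |Real.log (1 + mob l 1) - Real.log (1 + mob l 0)| = Real.log (A+1) - Real.log A := by
      rw [hlogdiff, hBA, hdet, abs_of_nonneg]
      exact sub_nonneg.2 (Real.log_le_log (by linarith) (by linarith))
    have hcu : Real.log (A+1) - Real.log A ≤ 1/A := by
      rw [← Real.log_div (by linarith) (by linarith)]
      have := Real.log_le_sub_one_of_pos (show (0:ℝ) < (A+1)/A by positivity)
      have heq : (A+1)/A - 1 = 1/A := by field_simp; ring
      linarith [heq ▸ this]
    have hcl : 1/(A+1) ≤ Real.log (A+1) - Real.log A := by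
      have := Real.log_le_sub_one_of_pos (show (0:ℝ) < A/(A+1) by positivity)
      rw [Real.log_div (by linarith) (by linarith)] at this
      have heq : A/(A+1) - 1 = -(1/(A+1)) := by field_simp; ring
      linarith
    -- from determinant 1 : qq < q
    have hdet' : (cmf l).pp * (cmf l).q = (cmf l).p * (cmf l).qq + 1 := by
      have h := cmf_det l
      have h1 : ((-1 : ℤ)) ^ l.length = 1 := by
        have hm := mdet_eq l
        rw [hdet] at hm
        exact_mod_cast hm.symm
      rw [h1] at h
      omega
    have hqlt : (cmf l).qq + 1 ≤ (cmf l).q := by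
      rcases Nat.lt_or_ge (cmf l).qq (cmf l).q with h | h
      · omega
      · exfalso
        have hqeq : (cmf l).qq = (cmf l).q := le_antisymm hqqq h
        rw [hqeq] at hdet'
        have : (cmf l).pp * (cmf l).q ≤ (cmf l).p * (cmf l).q := Nat.mul_le_mul_right _ hpp
        omega
    have cQlt : Q' + 1 ≤ Q := by rw [hQ', hQ]; exact_mod_cast hqlt
    constructor
    · rw [hc, hQdeq]
      have hpoly := poly_upper P' P Q' Q t cP'0 cP'P cQ'1 cQ'Q csum ht0 ht1
      have h1 : Real.log (A+1) - Real.log A ≤ 1/(A-1) := by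
        have h2 : (1:ℝ)/A ≤ 1/(A-1) :=
          one_div_le_one_div_of_le (by linarith) (by linarith)
        linarith
      calc (Real.log (A+1) - Real.log A) * ((Q + Q'*t)*((P+Q)+(P'+Q')*t))
          ≤ (1/(A-1)) * ((Q + Q'*t)*((P+Q)+(P'+Q')*t)) := by
            apply mul_le_mul_of_nonneg_right h1 (by rw [← hQdeq]; exact hQdpos.le)
        _ ≤ (1/(A-1)) * ((A-1)*(1+t)) := by
            apply mul_le_mul_of_nonneg_left (by rw [hA]; linarith [hpoly])
              (by apply div_nonneg zero_le_one; linarith)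
        _ = 1 + t := by
            rw [one_div_mul_eq_div, mul_div_cancel_left₀ _ (show (A:ℝ) - 1 ≠ 0 by linarith)]
    · rw [hc, hQdeq]
      have hpoly := poly_lower_eps P' P Q' Q t cP'0 cP'P cQ'1 cQlt csum ht0 ht1
      calc 1 + t ≤ (1/(A+1)) * ((A+1)*(1+t)) := by
            rw [one_div_mul_eq_div, mul_div_cancel_left₀ _ (show (A:ℝ) + 1 ≠ 0 by linarith)]
        _ ≤ (1/(A+1)) * (2*(Q + Q'*t)*((P+Q)+(P'+Q')*t)) := by
            apply mul_le_mul_of_nonneg_left (by rw [hA]; linarith [hpoly])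
              (by apply div_nonneg zero_le_one; linarith)
        _ ≤ 2 * (Real.log (A+1) - Real.log A) * ((Q + Q'*t)*((P+Q)+(P'+Q')*t)) := by
            have hQQ : 0 ≤ (Q + Q'*t)*((P+Q)+(P'+Q')*t) := by rw [← hQdeq]; exact hQdpos.le
            have h2 := mul_le_mul_of_nonneg_right hcl hQQ
            calc (1/(A+1)) * (2*(Q + Q'*t)*((P+Q)+(P'+Q')*t))
                = 2 * ((1/(A+1)) * ((Q + Q'*t)*((P+Q)+(P'+Q')*t))) := by ring
              _ ≤ 2 * ((Real.log (A+1) - Real.log A) * ((Q + Q'*t)*((P+Q)+(P'+Q')*t))) := by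
                  linarith
              _ = 2 * (Real.log (A+1) - Real.log A) * ((Q + Q'*t)*((P+Q)+(P'+Q')*t)) := by ring
  · -- B = A - 1 : c = log A - log (A-1)
    have hc : |Real.log (1 + mob l 1) - Real.log (1 + mob l 0)| = Real.log A - Real.log (A-1) := by
      rw [hlogdiff, hBA, hdet, (by ring : A + (-1:ℝ) = A - 1), abs_of_nonpos]
      · ring
      · exact sub_nonpos.2 (Real.log_le_log (by linarith) (by linarith))
    have hne1 : A - 1 ≠ 0 := by linarith
    have hne0 : A ≠ 0 := by linarith
    have hcu : Real.log A - Real.log (A-1) ≤ 1/(A-1) := by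
      have := Real.log_le_sub_one_of_pos (show (0:ℝ) < A/(A-1) from div_pos (by linarith) (by linarith))
      rw [Real.log_div (by linarith) (by linarith)] at this
      have heq : A/(A-1) - 1 = 1/(A-1) := by
        rw [div_sub_one hne1]
        congr 1
        ring
      linarith
    have hcl : 1/A ≤ Real.log A - Real.log (A-1) := by
      have := Real.log_le_sub_one_of_pos (show (0:ℝ) < (A-1)/A from div_pos (by linarith) (by linarith))
      rw [Real.log_div (by linarith) (by linarith)] at this
      have heq : (A-1)/A - 1 = -(1/A) := by
        rw [div_sub_one hne0, show A - 1 - A = -1 by ring, neg_div]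
      linarith
    constructor
    · rw [hc, hQdeq]
      have hpoly := poly_upper P' P Q' Q t cP'0 cP'P cQ'1 cQ'Q csum ht0 ht1
      calc (Real.log A - Real.log (A-1)) * ((Q + Q'*t)*((P+Q)+(P'+Q')*t))
          ≤ (1/(A-1)) * ((Q + Q'*t)*((P+Q)+(P'+Q')*t)) := by
            apply mul_le_mul_of_nonneg_right hcu (by rw [← hQdeq]; exact hQdpos.le)
        _ ≤ (1/(A-1)) * ((A-1)*(1+t)) := by
            apply mul_le_mul_of_nonneg_left (by rw [hA]; linarith [hpoly])
              (by apply div_nonneg zero_le_one; linarith)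
        _ = 1 + t := by
            rw [one_div_mul_eq_div, mul_div_cancel_left₀ _ (show (A:ℝ) - 1 ≠ 0 by linarith)]
    · rw [hc, hQdeq]
      have hpoly := poly_lower_gen P' P Q' Q t cP'0 cP'P cQ'1 cQ'Q ht0 ht1
      calc 1 + t ≤ (1/A) * (A*(1+t)) := by
            rw [one_div_mul_eq_div, mul_div_cancel_left₀ _ (show (A:ℝ) ≠ 0 by linarith)]
        _ ≤ (1/A) * (2*(Q + Q'*t)*((P+Q)+(P'+Q')*t)) := by
            apply mul_le_mul_of_nonneg_left (by rw [hA]; linarith [hpoly])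
              (by apply div_nonneg zero_le_one; linarith)
        _ ≤ 2 * (Real.log A - Real.log (A-1)) * ((Q + Q'*t)*((P+Q)+(P'+Q')*t)) := by
            have hQQ : 0 ≤ (Q + Q'*t)*((P+Q)+(P'+Q')*t) := by rw [← hQdeq]; exact hQdpos.le
            have h2 := mul_le_mul_of_nonneg_right hcl hQQ
            calc (1/A) * (2*(Q + Q'*t)*((P+Q)+(P'+Q')*t))
                = 2 * ((1/A) * ((Q + Q'*t)*((P+Q)+(P'+Q')*t))) := by ring
              _ ≤ 2 * ((Real.log A - Real.log (A-1)) * ((Q + Q'*t)*((P+Q)+(P'+Q')*t))) := by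
                  linarith
              _ = 2 * (Real.log A - Real.log (A-1)) * ((Q + Q'*t)*((P+Q)+(P'+Q')*t)) := by ring

set_option maxHeartbeats 1000000 in
lemma logmob_comparison (l : List ℕ) (hl : ∀ x ∈ l, 1 ≤ x) (hne : l ≠ [])
    {x0 x1 : ℝ} (h0 : 0 ≤ x0) (h01 : x0 ≤ x1) (h11 : x1 ≤ 1) :
    |Real.log (1 + mob l 1) - Real.log (1 + mob l 0)| * (Real.log (1+x1) - Real.log (1+x0)) ≤
        |Real.log (1 + mob l x1) - Real.log (1 + mob l x0)| ∧
      |Real.log (1 + mob l x1) - Real.log (1 + mob l x0)| ≤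
        2 * |Real.log (1 + mob l 1) - Real.log (1 + mob l 0)| *
          (Real.log (1+x1) - Real.log (1+x0)) := by
  set c := |Real.log (1 + mob l 1) - Real.log (1 + mob l 0)| with hc
  have hc0 : 0 ≤ c := abs_nonneg _
  have hσ := mdet_cases l
  have hσσ : mdet l * mdet l = 1 := by rcases hσ with h | h <;> rw [h] <;> norm_num
  have habs : |mdet l| = 1 := by rcases hσ with h | h <;> rw [h] <;> norm_num
  have hG : ∀ x : ℝ, 0 ≤ x → HasDerivAt (fun y : ℝ => Real.log (1+y)) ((1+x)⁻¹) x := by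
    intro x hx
    have hd : HasDerivAt (fun y : ℝ => 1 + y) 1 x := (hasDerivAt_id x).const_add 1
    exact ((Real.hasDerivAt_log (by intro h; linarith [h] : (1:ℝ)+x ≠ 0)).comp x hd).congr_deriv (mul_one _)
  have hH1deriv : ∀ x : ℝ, 0 ≤ x →
      HasDerivAt (fun y => mdet l * Real.log (1 + mob l y) - c * Real.log (1+y))
        (mdet l * (mdet l / Qd l x) - c * (1+x)⁻¹) x := fun x hx =>
    ((hasDerivAt_logmob l hl hx).const_mul (mdet l)).sub ((hG x hx).const_mul c)
  have hH2deriv : ∀ x : ℝ, 0 ≤ x →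
      HasDerivAt (fun y => 2 * c * Real.log (1+y) - mdet l * Real.log (1 + mob l y))
        (2 * c * (1+x)⁻¹ - mdet l * (mdet l / Qd l x)) x := fun x hx =>
    ((hG x hx).const_mul (2*c)).sub ((hasDerivAt_logmob l hl hx).const_mul (mdet l))
  have hσQd : ∀ x : ℝ, 0 ≤ x → mdet l * (mdet l / Qd l x) = 1 / Qd l x := by
    intro x hx
    rw [mul_div_assoc', hσσ]
  have hmono1 : MonotoneOn (fun y => mdet l * Real.log (1 + mob l y) - c * Real.log (1+y))
      (Set.Icc 0 1) := by
    apply monotoneOn_of_deriv_nonneg (convex_Icc 0 1)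
    · exact fun x hx => (hH1deriv x hx.1).continuousAt.continuousWithinAt
    · intro x hx
      rw [interior_Icc] at hx
      exact (hH1deriv x hx.1.le).differentiableAt.differentiableWithinAt
    · intro x hx
      rw [interior_Icc] at hx
      rw [(hH1deriv x hx.1.le).deriv, hσQd x hx.1.le]
      have hQd := Qd_pos l hl hx.1.le
      have h1x : (0:ℝ) < 1 + x := by linarith [hx.1]
      have hm := (master l hl hne hx.1.le hx.2.le).1
      rw [sub_nonneg, ← div_eq_mul_inv, div_le_div_iff₀ h1x hQd]
      linarith
  have hmono2 : MonotoneOn (fun y => 2 * c * Real.log (1+y) - mdet l * Real.log (1 + mob l y))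
      (Set.Icc 0 1) := by
    apply monotoneOn_of_deriv_nonneg (convex_Icc 0 1)
    · exact fun x hx => (hH2deriv x hx.1).continuousAt.continuousWithinAt
    · intro x hx
      rw [interior_Icc] at hx
      exact (hH2deriv x hx.1.le).differentiableAt.differentiableWithinAt
    · intro x hx
      rw [interior_Icc] at hx
      rw [(hH2deriv x hx.1.le).deriv, hσQd x hx.1.le]
      have hQd := Qd_pos l hl hx.1.le
      have h1x : (0:ℝ) < 1 + x := by linarith [hx.1]
      have hm := (master l hl hne hx.1.le hx.2.le).2
      rw [sub_nonneg, ← div_eq_mul_inv, div_le_div_iff₀ hQd h1x]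
      linarith
  have hx0m : x0 ∈ Set.Icc (0:ℝ) 1 := ⟨h0, le_trans h01 h11⟩
  have hx1m : x1 ∈ Set.Icc (0:ℝ) 1 := ⟨le_trans h0 h01, h11⟩
  have hm1 := hmono1 hx0m hx1m h01
  have hm2 := hmono2 hx0m hx1m h01
  dsimp only at hm1 hm2
  have hGmono : Real.log (1+x0) ≤ Real.log (1+x1) :=
    Real.log_le_log (by linarith) (by linarith)
  have hkey1 : c * (Real.log (1+x1) - Real.log (1+x0)) ≤
      mdet l * (Real.log (1 + mob l x1) - Real.log (1 + mob l x0)) := by linarith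
  have hkey2 : mdet l * (Real.log (1 + mob l x1) - Real.log (1 + mob l x0)) ≤
      2 * c * (Real.log (1+x1) - Real.log (1+x0)) := by linarith
  have hnn : 0 ≤ mdet l * (Real.log (1 + mob l x1) - Real.log (1 + mob l x0)) := by
    have : 0 ≤ c * (Real.log (1+x1) - Real.log (1+x0)) :=
      mul_nonneg hc0 (by linarith)
    linarith
  have habs2 : |Real.log (1 + mob l x1) - Real.log (1 + mob l x0)| =
      mdet l * (Real.log (1 + mob l x1) - Real.log (1 + mob l x0)) := by
    rw [← abs_of_nonneg hnn, abs_mul, habs, one_mul]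
  rw [habs2]
  exact ⟨hkey1, hkey2⟩

lemma ofFn_fin_append {m n : ℕ} (a : Fin m → ℕ) (b : Fin n → ℕ) :
    List.ofFn (Fin.append a b) = List.ofFn a ++ List.ofFn b := by
  rw [List.ofFn_add]
  congr 1
  · congr 1
    funext i
    exact Fin.append_left a b i
  · congr 1
    funext i
    exact Fin.append_right a b i

set_option maxHeartbeats 1000000 in
theorem gauss_measure_quasi_independence
    (m n : ℕ) (hm : 1 ≤ m) (hn : 1 ≤ n)
    (a : Fin m → ℕ) (b : Fin n → ℕ) (ha : ∀ i, 1 ≤ a i) (hb : ∀ i, 1 ≤ b i) :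
    Real.log 2 ≤
      (gaussMeasure (cylinder (m + n) (Fin.append a b))).toReal /
        ((gaussMeasure (cylinder m a)).toReal * (gaussMeasure (cylinder n b)).toReal) ∧
    (gaussMeasure (cylinder (m + n) (Fin.append a b))).toReal /
        ((gaussMeasure (cylinder m a)).toReal * (gaussMeasure (cylinder n b)).toReal)
      ≤ 2 * Real.log 2 := by
  have hla : ∀ x ∈ List.ofFn a, 1 ≤ x := by
    intro x hx; rw [List.mem_ofFn] at hx; obtain ⟨i, rfl⟩ := hx; exact ha i
  have hlb : ∀ x ∈ List.ofFn b, 1 ≤ x := by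
    intro x hx; rw [List.mem_ofFn] at hx; obtain ⟨i, rfl⟩ := hx; exact hb i
  have habd : ∀ i, 1 ≤ Fin.append a b i := by
    intro i
    induction i using Fin.addCases with
    | left i => rw [Fin.append_left]; exact ha i
    | right i => rw [Fin.append_right]; exact hb i
  have hmab := gaussMeasure_cyl (m+n) (Fin.append a b) habd
  have hma := gaussMeasure_cyl m a ha
  have hmb := gaussMeasure_cyl n b hb
  rw [ofFn_fin_append] at hmab
  set la := List.ofFn a with hladef
  set lb := List.ofFn b with hlbdef
  have hnea : la ≠ [] := by
    rw [hladef]; intro h; rw [List.ofFn_eq_nil_iff] at h; omega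
  have hneb : lb ≠ [] := by
    rw [hlbdef]; intro h; rw [List.ofFn_eq_nil_iff] at h; omega
  have h0m : (0:ℝ) ∈ Set.Icc (0:ℝ) 1 := ⟨le_rfl, zero_le_one⟩
  have h1m : (1:ℝ) ∈ Set.Icc (0:ℝ) 1 := ⟨zero_le_one, le_rfl⟩
  have hcomp0 : mob (la ++ lb) 0 = mob la (mob lb 0) := mob_append la lb hla hlb h0m
  have hcomp1 : mob (la ++ lb) 1 = mob la (mob lb 1) := mob_append la lb hla hlb h1m
  have hb0 := mob_mem_Icc lb hlb h0m
  have hb1 := mob_mem_Icc lb hlb h1m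
  set Ca := |Real.log (1 + mob la 1) - Real.log (1 + mob la 0)| with hCadef
  set Cb := |Real.log (1 + mob lb 1) - Real.log (1 + mob lb 0)| with hCbdef
  set Cab := |Real.log (1 + mob (la ++ lb) 1) - Real.log (1 + mob (la ++ lb) 0)| with hCabdef
  have hkey : Ca * Cb ≤ Cab ∧ Cab ≤ 2 * Ca * Cb := by
    rcases le_total (mob lb 0) (mob lb 1) with h | h
    · have hcmp := logmob_comparison la hla hnea hb0.1 h hb1.2
      have hCbeq : Cb = Real.log (1 + mob lb 1) - Real.log (1 + mob lb 0) := by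
        rw [hCbdef]
        exact abs_of_nonneg (sub_nonneg.2 (Real.log_le_log (by linarith [hb0.1]) (by linarith)))
      rw [hCabdef, hcomp0, hcomp1, hCbeq]
      exact hcmp
    · have hcmp := logmob_comparison la hla hnea hb1.1 h hb0.2
      have hCbeq : Cb = Real.log (1 + mob lb 0) - Real.log (1 + mob lb 1) := by
        rw [hCbdef, abs_of_nonpos (sub_nonpos.2 (Real.log_le_log (by linarith [hb1.1]) (by linarith)))]
        ring
      rw [hCabdef, hcomp0, hcomp1, abs_sub_comm, hCbeq]
      exact hcmp
  have hca : 0 < Ca := by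
    have hmst := (master la hla hnea (le_refl (0:ℝ)) zero_le_one).2
    have hQd := Qd_pos la hla (le_refl (0:ℝ))
    by_contra hneg
    push_neg at hneg
    rw [← hCadef] at hmst
    nlinarith [mul_nonneg (neg_nonneg.2 hneg) hQd.le]
  have hcb : 0 < Cb := by
    have hmst := (master lb hlb hneb (le_refl (0:ℝ)) zero_le_one).2
    have hQd := Qd_pos lb hlb (le_refl (0:ℝ))
    by_contra hneg
    push_neg at hneg
    rw [← hCbdef] at hmst
    nlinarith [mul_nonneg (neg_nonneg.2 hneg) hQd.le]
  have hlog2 : 0 < Real.log 2 := Real.log_pos one_lt_two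
  rw [hmab, hma, hmb, ENNReal.toReal_ofReal (div_nonneg (abs_nonneg _) hlog2.le),
    ENNReal.toReal_ofReal (div_nonneg (abs_nonneg _) hlog2.le),
    ENNReal.toReal_ofReal (div_nonneg (abs_nonneg _) hlog2.le)]
  have hratio : (Cab / Real.log 2) / ((Ca / Real.log 2) * (Cb / Real.log 2)) =
      Real.log 2 * Cab / (Ca * Cb) := by
    field_simp
  rw [← hCadef, ← hCbdef, ← hCabdef, hratio]
  constructor
  · rw [le_div_iff₀ (mul_pos hca hcb)]
    have := mul_le_mul_of_nonneg_left hkey.1 hlog2.le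
    linarith
  · rw [div_le_iff₀ (mul_pos hca hcb)]
    have := mul_le_mul_of_nonneg_left hkey.2 hlog2.le
    nlinarith
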